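/- Let μ be a tempered positive Borel measure on ℝⁿ whose support is Ω. Let f : ℝⁿ → ℂ be a measurable rapidly decreasing function, i.e., for every N ∈ ℕ there is a constant C_N with |f(η)| ≤ C_N (1+‖η‖)^{−N} for all η ∈ ℝⁿ. Let ξ₀ ∈ ℝⁿ, ξ₀ ≠ 0, be such that −ξ₀ does not belong to the asymptotic cone AC(Ω). Then there exists a compact neighborhood K of ξ₀ such that for every t ≥ 1 and ξ ∈ K the integral I(ξ,t) = ∫ f(ω + tξ) dμ(ω) is absolutely convergent, and for every N ∈ ℕ one has sup_{ξ ∈ K, t ≥ 1} t^N |I(ξ,t)| < ∞, i.e., I(ξ,t) is rapidly decreasing as t → +∞, uniformly for ξ ∈ K. (Content of the proof of Theorem IV.3, part 1; cf. [D-V lemme 4].) -/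

import Mathlib

open MeasureTheory Pointwise

/-- A positive Borel measure `μ` on `ℝⁿ` is *tempered* if `∫ (1+‖ω‖)^{−N₀} dμ(ω) < ∞`
for some natural number `N₀`. -/
def IsTemperedMeasure {n : ℕ} (μ : Measure (EuclideanSpace ℝ (Fin n))) : Prop :=
  ∃ N₀ : ℕ, ∫⁻ ω, ENNReal.ofReal ((1 + ‖ω‖) ^ (-(N₀ : ℝ))) ∂μ < ⊤

/-- The (topological) support of a measure: the set of points all of whose neighbourhoods
have positive measure. -/
def measureSupport {n : ℕ} (μ : Measure (EuclideanSpace ℝ (Fin n))) :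
    Set (EuclideanSpace ℝ (Fin n)) :=
  {x | ∀ U ∈ nhds x, μ U ≠ 0}

/-- A *conic neighbourhood* of `ξ` is an open set containing `ξ` that is stable under
multiplication by positive scalars. -/
def IsConicNbhd {n : ℕ} (ξ : EuclideanSpace ℝ (Fin n))
    (C : Set (EuclideanSpace ℝ (Fin n))) : Prop :=
  IsOpen C ∧ ξ ∈ C ∧ ∀ t : ℝ, 0 < t → t • C = C

/-- The *asymptotic cone* of a subset `Ω` of `ℝⁿ`. -/
def asympCone {n : ℕ} (Ω : Set (EuclideanSpace ℝ (Fin n))) :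
    Set (EuclideanSpace ℝ (Fin n)) :=
  {ξ | ∀ C, IsConicNbhd ξ C → ¬ Bornology.IsBounded (Ω ∩ C)}

/-- If `μ` is a tempered measure on `ℝⁿ` with support `Ω`, `f` is measurable and rapidly
decreasing, and `−ξ₀ ∉ AC(Ω)` with `ξ₀ ≠ 0`, then there is a compact neighbourhood `K` of
`ξ₀` such that `I(ξ,t) = ∫ f(ω + tξ) dμ(ω)` converges absolutely for `ξ ∈ K`, `t ≥ 1`, and
is rapidly decreasing as `t → +∞`, uniformly in `ξ ∈ K`. -/
lemma aux_rpow_bound {A B c : ℝ} (hB : 0 < B) (hc : 0 < c) (h : c * B ≤ A) {k : ℝ}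
    (hk : 0 ≤ k) : A ^ (-k) ≤ c ^ (-k) * B ^ (-k) := by
  rw [← Real.mul_rpow hc.le hB.le]
  exact Real.rpow_le_rpow_of_nonpos (mul_pos hc hB) h (neg_nonpos.mpr hk)

lemma aux_measure_compl_support {n : ℕ} (μ : Measure (EuclideanSpace ℝ (Fin n))) :
    μ (measureSupport μ)ᶜ = 0 := by
  refine measure_null_of_locally_null _ (fun x hx => ?_)
  simp only [measureSupport, Set.mem_compl_iff, Set.mem_setOf_eq] at hx
  push_neg at hx
  obtain ⟨U, hU, hU0⟩ := hx
  exact ⟨U, nhdsWithin_le_nhds hU, hU0⟩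

set_option maxHeartbeats 1000000 in
theorem integral_rapid_decay_of_not_mem_asympCone {n : ℕ}
    (μ : Measure (EuclideanSpace ℝ (Fin n))) (htemp : IsTemperedMeasure μ)
    (Ω : Set (EuclideanSpace ℝ (Fin n))) (hΩ : measureSupport μ = Ω)
    (f : EuclideanSpace ℝ (Fin n) → ℂ) (hfmeas : Measurable f)
    (hdecay : ∀ N : ℕ, ∃ C : ℝ, ∀ η, ‖f η‖ ≤ C * (1 + ‖η‖) ^ (-(N : ℝ)))
    (ξ₀ : EuclideanSpace ℝ (Fin n)) (hξ₀ : ξ₀ ≠ 0) (h : -ξ₀ ∉ asympCone Ω) :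
    ∃ K : Set (EuclideanSpace ℝ (Fin n)), IsCompact K ∧ K ∈ nhds ξ₀ ∧
      (∀ ξ ∈ K, ∀ t : ℝ, 1 ≤ t → Integrable (fun ω => f (ω + t • ξ)) μ) ∧
      ∀ N : ℕ, ∃ C : ℝ, ∀ ξ ∈ K, ∀ t : ℝ, 1 ≤ t →
        t ^ N * ‖∫ ω, f (ω + t • ξ) ∂μ‖ ≤ C := by
  rw [asympCone, Set.mem_setOf_eq] at h
  push_neg at h
  obtain ⟨C0, ⟨hC0open, hC0mem, hC0cone⟩, hbdd⟩ := h
  obtain ⟨N₀, hN₀⟩ := htemp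
  -- the weight function
  set g : EuclideanSpace ℝ (Fin n) → ℝ := fun ω => (1 + ‖ω‖) ^ (-(N₀ : ℝ)) with hgdef
  have hg_pos : ∀ ω, 0 < g ω := fun ω => Real.rpow_pos_of_pos (by positivity) _
  have hg_cont : Continuous g := by
    apply Continuous.rpow_const (continuous_const.add continuous_norm)
    intro x; left; exact ne_of_gt (by positivity : (0:ℝ) < 1 + ‖x‖)
  have hg_int : Integrable g μ := by
    refine ⟨hg_cont.aestronglyMeasurable, ?_⟩
    have he : ∀ a, ‖g a‖ₑ = ENNReal.ofReal (g a) := fun a =>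
      Real.enorm_eq_ofReal (hg_pos a).le
    simp only [HasFiniteIntegral, he]; exact hN₀
  -- a.e. membership in Ω
  have hnull : μ Ωᶜ = 0 := by rw [← hΩ]; exact aux_measure_compl_support μ
  have hae : ∀ᵐ ω ∂μ, ω ∈ Ω := by
    rw [ae_iff]
    simpa [Set.compl_def] using hnull
  -- geometry
  have hr : 0 < ‖ξ₀‖ := norm_pos_iff.mpr hξ₀
  set r := ‖ξ₀‖ with hrdef
  obtain ⟨ε, hε, hball⟩ := Metric.isOpen_iff.mp hC0open _ hC0mem
  set δ := min (ε / 4) (r / 4) with hδdef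
  have hδ : 0 < δ := lt_min (by linarith) (by linarith)
  have hδε : 2 * δ < ε := by
    have := min_le_left (ε / 4) (r / 4); rw [← hδdef] at this; linarith
  have hδr : δ ≤ r / 4 := min_le_right _ _
  -- points outside the cone are far from -t ξ₀
  have hout : ∀ t : ℝ, 0 < t → ∀ ω, ω ∉ C0 → 2 * t * δ ≤ ‖ω + t • ξ₀‖ := by
    intro t ht ω hωC
    by_contra hcon
    push_neg at hcon
    set y := t⁻¹ • ω with hy
    have hyC : y ∈ C0 := by
      apply hball
      rw [Metric.mem_ball, dist_eq_norm, sub_neg_eq_add]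
      have : y + ξ₀ = t⁻¹ • (ω + t • ξ₀) := by
        rw [smul_add, smul_smul, inv_mul_cancel₀ ht.ne', one_smul]
      rw [this, norm_smul, Real.norm_eq_abs, abs_of_pos (inv_pos.mpr ht)]
      rw [inv_mul_lt_iff₀ ht]
      calc ‖ω + t • ξ₀‖ < 2 * t * δ := hcon
        _ ≤ t * ε := by nlinarith
    apply hωC
    rw [← hC0cone t ht]
    exact ⟨y, hyC, by simp [hy, smul_smul, mul_inv_cancel₀ ht.ne']⟩
  -- bound on the bounded part
  obtain ⟨M0, hM0⟩ := isBounded_iff_forall_norm_le.mp hbdd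
  set M := max M0 1 with hMdef
  have hM1 : (1 : ℝ) ≤ M := le_max_right _ _
  have hMpos : (0 : ℝ) < M := by linarith
  -- constants
  set R := r + δ with hRdef
  have hRpos : 0 < R := by linarith
  set a := r / 2 with hadef
  have hapos : 0 < a := by positivity
  set ct := min δ (a / (2 * M)) with hctdef
  have hct : 0 < ct := lt_min hδ (by positivity)
  have hctδ : ct ≤ δ := min_le_left _ _
  have hctM : 2 * M * ct ≤ a := by
    have h1 : ct ≤ a / (2 * M) := min_le_right _ _
    rw [le_div_iff₀ (by positivity)] at h1; linarith
  set cw := min (1 / 2) (min (δ / (1 + 2 * R)) (1 / (1 + M))) with hcwdef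
  have hcw : 0 < cw := lt_min (by norm_num) (lt_min (by positivity) (by positivity))
  have hcwhalf : cw ≤ 1 / 2 := min_le_left _ _
  have hcwδ : cw * (1 + 2 * R) ≤ δ := by
    have h1 : cw ≤ δ / (1 + 2 * R) := le_trans (min_le_right _ _) (min_le_left _ _)
    rw [le_div_iff₀ (by positivity)] at h1; linarith
  have hcwM : cw * (1 + M) ≤ 1 := by
    have h1 : cw ≤ 1 / (1 + M) := le_trans (min_le_right _ _) (min_le_right _ _)
    rw [le_div_iff₀ (by positivity)] at h1; linarith
  set K := Metric.closedBall ξ₀ δ with hKdef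
  -- key two-sided lower bound
  have key : ∀ ξ ∈ K, ∀ t : ℝ, 1 ≤ t → ∀ ω ∈ Ω,
      ct * t ≤ 1 + ‖ω + t • ξ‖ ∧ cw * (1 + ‖ω‖) ≤ 1 + ‖ω + t • ξ‖ := by
    intro ξ hξ t ht ω hω
    have ht0 : (0 : ℝ) < t := lt_of_lt_of_le one_pos ht
    have hξd : ‖ξ - ξ₀‖ ≤ δ := by
      rw [hKdef, Metric.mem_closedBall, dist_eq_norm] at hξ; exact hξ
    have hξle : ‖ξ‖ ≤ R := by
      have h1 : ‖ξ‖ ≤ ‖ξ₀‖ + ‖ξ - ξ₀‖ := by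
        calc ‖ξ‖ = ‖ξ₀ + (ξ - ξ₀)‖ := by rw [add_sub_cancel]
          _ ≤ ‖ξ₀‖ + ‖ξ - ξ₀‖ := norm_add_le _ _
      rw [hRdef]; rw [← hrdef] at h1; linarith
    have hξge : a ≤ ‖ξ‖ := by
      have h1 : ‖ξ₀‖ ≤ ‖ξ‖ + ‖ξ - ξ₀‖ := by
        calc ‖ξ₀‖ = ‖ξ - (ξ - ξ₀)‖ := by rw [sub_sub_cancel]
          _ ≤ ‖ξ‖ + ‖ξ - ξ₀‖ := norm_sub_le _ _
      rw [← hrdef] at h1; rw [hadef]; linarith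
    have hnonneg := norm_nonneg (ω + t • ξ)
    by_cases hC : ω ∈ C0
    · -- bounded region
      have hωM : ‖ω‖ ≤ M := le_trans (hM0 ω ⟨hω, hC⟩) (le_max_left _ _)
      constructor
      · by_cases hta : a * t ≤ 2 * M
        · -- then ct * t ≤ 1
          nlinarith [mul_le_mul_of_nonneg_right hctM ht0.le]
        · push_neg at hta
          have h3 : ‖t • ξ‖ ≤ ‖ω + t • ξ‖ + ‖ω‖ := by
            calc ‖t • ξ‖ = ‖(ω + t • ξ) - ω‖ := by rw [add_sub_cancel_left]
              _ ≤ ‖ω + t • ξ‖ + ‖ω‖ := norm_sub_le _ _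
          have h4 : ‖t • ξ‖ = t * ‖ξ‖ := by
            rw [norm_smul, Real.norm_eq_abs, abs_of_pos ht0]
          have h5 : a * t ≤ t * ‖ξ‖ := by nlinarith
          have hlow : a * t - M ≤ ‖ω + t • ξ‖ := by linarith
          linarith [mul_le_mul_of_nonneg_right hctM ht0.le,
            mul_nonneg (sub_nonneg.mpr hM1) (mul_nonneg hct.le ht0.le)]
      · nlinarith [mul_nonneg hcw.le (sub_nonneg.mpr hωM)]
    · -- outside the cone
      have h2δ : 2 * t * δ ≤ ‖ω + t • ξ₀‖ := hout t ht0 ω hC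
      have htri : ‖ω + t • ξ₀‖ ≤ ‖ω + t • ξ‖ + t * ‖ξ₀ - ξ‖ := by
        have h6 : ω + t • ξ₀ = (ω + t • ξ) + t • (ξ₀ - ξ) := by
          rw [smul_sub]; abel
        calc ‖ω + t • ξ₀‖ = ‖(ω + t • ξ) + t • (ξ₀ - ξ)‖ := by rw [← h6]
          _ ≤ ‖ω + t • ξ‖ + ‖t • (ξ₀ - ξ)‖ := norm_add_le _ _
          _ = ‖ω + t • ξ‖ + t * ‖ξ₀ - ξ‖ := by
              rw [norm_smul, Real.norm_eq_abs, abs_of_pos ht0]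
      have hξd' : ‖ξ₀ - ξ‖ ≤ δ := by rw [norm_sub_rev]; exact hξd
      have hδt : t * δ ≤ ‖ω + t • ξ‖ := by nlinarith
      constructor
      · nlinarith [mul_le_mul_of_nonneg_right hctδ ht0.le]
      · by_cases hbig : 2 * R * t ≤ ‖ω‖
        · have h7 : ‖ω‖ ≤ ‖ω + t • ξ‖ + t * ‖ξ‖ := by
            calc ‖ω‖ = ‖(ω + t • ξ) - t • ξ‖ := by rw [add_sub_cancel_right]
              _ ≤ ‖ω + t • ξ‖ + ‖t • ξ‖ := norm_sub_le _ _
              _ = ‖ω + t • ξ‖ + t * ‖ξ‖ := by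
                  rw [norm_smul, Real.norm_eq_abs, abs_of_pos ht0]
          have h8 : t * ‖ξ‖ ≤ t * R := by nlinarith
          have hlow2 : ‖ω‖ - t * R ≤ ‖ω + t • ξ‖ := by linarith
          nlinarith [mul_nonneg (sub_nonneg.mpr hcwhalf) (by positivity : (0:ℝ) ≤ 1 + ‖ω‖)]
        · push_neg at hbig
          have e1 : 1 + ‖ω‖ ≤ (1 + 2 * R) * t := by nlinarith
          have e2 : cw * (1 + ‖ω‖) ≤ cw * ((1 + 2 * R) * t) :=
            mul_le_mul_of_nonneg_left e1 hcw.le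
          nlinarith [mul_le_mul_of_nonneg_right hcwδ ht0.le]
  -- integrability
  have hmeasI : ∀ v : EuclideanSpace ℝ (Fin n),
      AEStronglyMeasurable (fun ω => f (ω + v)) μ := fun v =>
    (hfmeas.comp (measurable_add_const v)).aestronglyMeasurable
  obtain ⟨c0, hc0⟩ := hdecay N₀
  have hshift : ∀ v ω : EuclideanSpace ℝ (Fin n),
      (1 + ‖v‖)⁻¹ * (1 + ‖ω‖) ≤ 1 + ‖ω + v‖ := by
    intro v ω
    have h1 : ‖ω‖ ≤ ‖ω + v‖ + ‖v‖ := by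
      calc ‖ω‖ = ‖(ω + v) - v‖ := by rw [add_sub_cancel_right]
        _ ≤ ‖ω + v‖ + ‖v‖ := norm_sub_le _ _
    rw [inv_mul_le_iff₀ (by positivity)]
    nlinarith [norm_nonneg v, norm_nonneg (ω + v), norm_nonneg ω]
  have hint : ∀ ξ ∈ K, ∀ t : ℝ, 1 ≤ t → Integrable (fun ω => f (ω + t • ξ)) μ := by
    intro ξ hξ t ht
    set v := t • ξ with hv
    refine (hg_int.const_mul (max c0 0 * ((1 + ‖v‖)⁻¹) ^ (-(N₀ : ℝ)))).mono'
      (hmeasI v) ?_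
    filter_upwards with ω
    have hb := aux_rpow_bound (by positivity : (0:ℝ) < 1 + ‖ω‖)
      (by positivity : (0:ℝ) < (1 + ‖v‖)⁻¹) (hshift v ω)
      (Nat.cast_nonneg N₀ : (0:ℝ) ≤ (N₀ : ℝ))
    calc ‖f (ω + v)‖ ≤ c0 * (1 + ‖ω + v‖) ^ (-(N₀ : ℝ)) := hc0 _
      _ ≤ max c0 0 * (1 + ‖ω + v‖) ^ (-(N₀ : ℝ)) := by
          apply mul_le_mul_of_nonneg_right (le_max_left _ _) (by positivity)
      _ ≤ max c0 0 * (((1 + ‖v‖)⁻¹) ^ (-(N₀ : ℝ)) * (1 + ‖ω‖) ^ (-(N₀ : ℝ))) := by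
          apply mul_le_mul_of_nonneg_left hb (le_max_right _ _)
      _ = max c0 0 * ((1 + ‖v‖)⁻¹) ^ (-(N₀ : ℝ)) * g ω := by rw [hgdef]; ring
  refine ⟨K, isCompact_closedBall _ _, Metric.closedBall_mem_nhds _ hδ, hint, ?_⟩
  -- rapid decay
  intro N
  obtain ⟨Cf, hCf⟩ := hdecay (N + N₀)
  set D := max Cf 0 * ct ^ (-(N : ℝ)) * cw ^ (-(N₀ : ℝ)) with hDdef
  refine ⟨D * ∫ ω, g ω ∂μ, ?_⟩
  intro ξ hξ t ht
  have ht0 : (0 : ℝ) < t := lt_of_lt_of_le one_pos ht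
  have hptw : ∀ ω ∈ Ω, t ^ N * ‖f (ω + t • ξ)‖ ≤ D * g ω := by
    intro ω hω
    obtain ⟨k1, k2⟩ := key ξ hξ t ht ω hω
    have hA : (0 : ℝ) < 1 + ‖ω + t • ξ‖ := by positivity
    have hexp : -(((N + N₀ : ℕ)) : ℝ) = -(N : ℝ) + -(N₀ : ℝ) := by push_cast; ring
    have e0 : ‖f (ω + t • ξ)‖ ≤
        max Cf 0 * ((1 + ‖ω + t • ξ‖) ^ (-(N : ℝ)) * (1 + ‖ω + t • ξ‖) ^ (-(N₀ : ℝ))) := by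
      calc ‖f (ω + t • ξ)‖ ≤ Cf * (1 + ‖ω + t • ξ‖) ^ (-((N + N₀ : ℕ) : ℝ)) := hCf _
        _ ≤ max Cf 0 * (1 + ‖ω + t • ξ‖) ^ (-((N + N₀ : ℕ) : ℝ)) :=
            mul_le_mul_of_nonneg_right (le_max_left _ _) (by positivity)
        _ = max Cf 0 * ((1 + ‖ω + t • ξ‖) ^ (-(N : ℝ)) * (1 + ‖ω + t • ξ‖) ^ (-(N₀ : ℝ))) := by
            rw [hexp, Real.rpow_add hA]
    have e1 : (1 + ‖ω + t • ξ‖) ^ (-(N : ℝ)) ≤ ct ^ (-(N : ℝ)) * t ^ (-(N : ℝ)) :=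
      aux_rpow_bound ht0 hct k1 (Nat.cast_nonneg N)
    have e2 : (1 + ‖ω + t • ξ‖) ^ (-(N₀ : ℝ)) ≤ cw ^ (-(N₀ : ℝ)) * (1 + ‖ω‖) ^ (-(N₀ : ℝ)) :=
      aux_rpow_bound (by positivity) hcw k2 (Nat.cast_nonneg N₀)
    have htt : t ^ N * t ^ (-(N : ℝ)) = 1 := by
      rw [← Real.rpow_natCast t N, ← Real.rpow_add ht0]; simp
    have e3 := mul_le_mul e1 e2 (by positivity) (by positivity)
    calc t ^ N * ‖f (ω + t • ξ)‖
        ≤ t ^ N * (max Cf 0 * ((1 + ‖ω + t • ξ‖) ^ (-(N : ℝ)) *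
            (1 + ‖ω + t • ξ‖) ^ (-(N₀ : ℝ)))) :=
          mul_le_mul_of_nonneg_left e0 (by positivity)
      _ = (t ^ N * max Cf 0) * ((1 + ‖ω + t • ξ‖) ^ (-(N : ℝ)) *
            (1 + ‖ω + t • ξ‖) ^ (-(N₀ : ℝ))) := by ring
      _ ≤ (t ^ N * max Cf 0) * ((ct ^ (-(N : ℝ)) * t ^ (-(N : ℝ))) *
            (cw ^ (-(N₀ : ℝ)) * (1 + ‖ω‖) ^ (-(N₀ : ℝ)))) :=
          mul_le_mul_of_nonneg_left e3 (by positivity)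
      _ = (t ^ N * t ^ (-(N : ℝ))) *
            (max Cf 0 * ct ^ (-(N : ℝ)) * cw ^ (-(N₀ : ℝ)) * (1 + ‖ω‖) ^ (-(N₀ : ℝ))) := by
          ring
      _ = D * g ω := by rw [htt, one_mul, hDdef, hgdef]
  calc t ^ N * ‖∫ ω, f (ω + t • ξ) ∂μ‖
      ≤ t ^ N * ∫ ω, ‖f (ω + t • ξ)‖ ∂μ :=
        mul_le_mul_of_nonneg_left (norm_integral_le_integral_norm _) (by positivity)
    _ = ∫ ω, t ^ N * ‖f (ω + t • ξ)‖ ∂μ := (integral_const_mul _ _).symm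
    _ ≤ ∫ ω, D * g ω ∂μ := by
        apply integral_mono_ae ((hint ξ hξ t ht).norm.const_mul _) (hg_int.const_mul D)
        filter_upwards [hae] with ω hω using hptw ω hω
    _ = D * ∫ ω, g ω ∂μ := integral_const_mul _ _
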